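/- Let A be a family of subsets of {1,...,n} such that for all distinct A, B in the family, |A \ B| ≠ 2|B \ A|. Then for every l ≤ n/3, the sum over j from l to 2l of |A_j| / C(n,j) is at most 1, where A_j denotes the sets in the family of size exactly j. -/

import Mathlib

open Finset
namespace Stmt0Aux

def II (n l j : ℕ) : Finset (Fin n) :=
  univ.filter (fun i => j - l ≤ i.val ∧ i.val < 2*j - l)

lemma card_filter_val (n a b : ℕ) (hb : b ≤ n) :
    ((univ : Finset (Fin n)).filter (fun i => a ≤ i.val ∧ i.val < b)).card = b - a := by
  have key : ((univ : Finset (Fin n)).filter (fun i => a ≤ i.val ∧ i.val < b)).map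
      Fin.valEmbedding = Finset.Ico a b := by
    ext m
    simp only [Finset.mem_map, Finset.mem_filter, Finset.mem_univ, true_and,
      Fin.valEmbedding_apply, Finset.mem_Ico]
    constructor
    · rintro ⟨i, ⟨h1, h2⟩, rfl⟩; exact ⟨h1, h2⟩
    · rintro ⟨h1, h2⟩; exact ⟨⟨m, lt_of_lt_of_le h2 hb⟩, ⟨h1, h2⟩, rfl⟩
  rw [← Nat.card_Ico a b, ← key, Finset.card_map]

lemma II_sdiff₁ {n l j k : ℕ} (hlj : l ≤ j) (hjk : j ≤ k) (hk : k ≤ 2*l) (hn : 3*l ≤ n) :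
    (II n l k \ II n l j).card = 2*(k - j) := by
  have he : II n l k \ II n l j =
      (univ : Finset (Fin n)).filter (fun i => 2*j - l ≤ i.val ∧ i.val < 2*k - l) := by
    ext i
    simp only [II, Finset.mem_sdiff, Finset.mem_filter, Finset.mem_univ, true_and, not_and,
      not_lt, not_le]
    omega
  rw [he, card_filter_val n _ _ (by omega)]; omega

lemma II_sdiff₂ {n l j k : ℕ} (hlj : l ≤ j) (hjk : j ≤ k) (hk : k ≤ 2*l) (hn : 3*l ≤ n) :
    (II n l j \ II n l k).card = k - j := by
  have he : II n l j \ II n l k =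
      (univ : Finset (Fin n)).filter (fun i => j - l ≤ i.val ∧ i.val < k - l) := by
    ext i
    simp only [II, Finset.mem_sdiff, Finset.mem_filter, Finset.mem_univ, true_and, not_and,
      not_lt, not_le]
    omega
  rw [he, card_filter_val n _ _ (by omega)]; omega

lemma exists_perm_image {n : ℕ} {S T : Finset (Fin n)} (h : S.card = T.card) :
    ∃ π : Equiv.Perm (Fin n), S.image π = T := by
  classical
  have h' : Fintype.card {x // ¬ x ∈ S} = Fintype.card {x // ¬ x ∈ T} := by
    simp only [Fintype.card_subtype_compl, Fintype.card_coe, h]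
  let ep : {x // x ∈ S} ≃ {x // x ∈ T} := Finset.equivOfCardEq h
  let en : {x // ¬ x ∈ S} ≃ {x // ¬ x ∈ T} := Fintype.equivOfCardEq h'
  refine ⟨ep.subtypeCongr en, ?_⟩
  apply Finset.eq_of_subset_of_card_le
  · intro y hy
    simp only [Finset.mem_image] at hy
    obtain ⟨x, hx, rfl⟩ := hy
    have : ep.subtypeCongr en x = (ep ⟨x, hx⟩ : Fin n) := by
      simp [Equiv.subtypeCongr, hx]
    rw [this]
    exact (ep ⟨x, hx⟩).2
  · rw [Finset.card_image_of_injective _ (Equiv.injective _), h]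

def EE (n l j : ℕ) (S : Finset (Fin n)) : Finset (Equiv.Perm (Fin n)) :=
  univ.filter (fun σ => (II n l j).image σ = S)

lemma II_card {n l j : ℕ} (hlj : l ≤ j) (hn : 2*j - l ≤ n) : (II n l j).card = j := by
  rw [II, card_filter_val n _ _ hn]; omega

lemma EE_card_eq {n l j : ℕ} {S T : Finset (Fin n)} (h : S.card = T.card) :
    (EE n l j S).card = (EE n l j T).card := by
  obtain ⟨π, hπ⟩ := exists_perm_image h
  apply Finset.card_bij' (fun σ _ => π * σ) (fun σ _ => π⁻¹ * σ)
  · intro σ hσ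
    simp only [EE, Finset.mem_filter, Finset.mem_univ, true_and] at hσ ⊢
    rw [Equiv.Perm.coe_mul, ← Finset.image_image, hσ, hπ]
  · intro σ hσ
    simp only [EE, Finset.mem_filter, Finset.mem_univ, true_and] at hσ ⊢
    rw [Equiv.Perm.coe_mul, ← Finset.image_image, hσ, ← hπ, Finset.image_image]
    have hid : (⇑π⁻¹ ∘ ⇑π) = id := by ext x; simp
    rw [hid, Finset.image_id]
  · intro σ hσ; group
  · intro σ hσ; group

lemma EE_card {n l j : ℕ} (hlj : l ≤ j) (hn : 2*j - l ≤ n) {S : Finset (Fin n)}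
    (hS : S.card = j) : (EE n l j S).card * n.choose j = n.factorial := by
  classical
  have hmaps : ∀ σ ∈ (univ : Finset (Equiv.Perm (Fin n))),
      (II n l j).image σ ∈ Finset.powersetCard j (univ : Finset (Fin n)) := by
    intro σ _
    rw [Finset.mem_powersetCard]
    exact ⟨Finset.subset_univ _, by
      rw [Finset.card_image_of_injective _ σ.injective, II_card hlj hn]⟩
  have hsum := Finset.card_eq_sum_card_fiberwise hmaps
  have hconst : ∀ T ∈ Finset.powersetCard j (univ : Finset (Fin n)),
      (Finset.filter (fun σ : Equiv.Perm (Fin n) => Finset.image (⇑σ) (II n l j) = T)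
        Finset.univ).card = (EE n l j S).card := by
    intro T hT
    rw [Finset.mem_powersetCard] at hT
    exact (EE_card_eq (n:=n) (l:=l) (j:=j) (S:=S) (T:=T) (hS.trans hT.2.symm)).symm
  rw [Finset.sum_congr rfl hconst, Finset.sum_const, smul_eq_mul] at hsum
  simp only [Finset.card_powersetCard, Finset.card_univ, Fintype.card_perm,
    Fintype.card_fin] at hsum
  rw [mul_comm]
  exact hsum.symm

lemma no_double {n l : ℕ} (hn : 3*l ≤ n) (𝒜 : Finset (Finset (Fin n)))
    (h : ∀ A ∈ 𝒜, ∀ B ∈ 𝒜, A ≠ B → (A \ B).card ≠ 2 * (B \ A).card)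
    {j k : ℕ} (hlj : l ≤ j) (hjk : j < k) (hk : k ≤ 2*l)
    {S T : Finset (Fin n)} (hS : S ∈ 𝒜) (hT : T ∈ 𝒜)
    {σ : Equiv.Perm (Fin n)} (hσS : (II n l j).image σ = S)
    (hσT : (II n l k).image σ = T) : False := by
  have hinj : Function.Injective σ := σ.injective
  have h1 : (T \ S).card = 2*(k-j) := by
    rw [← hσS, ← hσT, ← Finset.image_sdiff _ _ hinj,
      Finset.card_image_of_injective _ hinj, II_sdiff₁ hlj hjk.le hk hn]
  have h2 : (S \ T).card = k - j := by
    rw [← hσS, ← hσT, ← Finset.image_sdiff _ _ hinj,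
      Finset.card_image_of_injective _ hinj, II_sdiff₂ hlj hjk.le hk hn]
  have hne : T ≠ S := by
    intro e
    rw [e, Finset.sdiff_self, Finset.card_empty] at h1
    omega
  exact h T hT S hS hne (by rw [h1, h2])

end Stmt0Aux

theorem stmt_0 (n : ℕ) (𝒜 : Finset (Finset (Fin n)))
    (h : ∀ A ∈ 𝒜, ∀ B ∈ 𝒜, A ≠ B → (A \ B).card ≠ 2 * (B \ A).card)
    (l : ℕ) (hl : 3 * l ≤ n) :
    ∑ j ∈ Finset.Icc l (2 * l),
      ((𝒜.filter (fun s => s.card = j)).card : ℝ) / (n.choose j : ℝ) ≤ 1 := by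
  classical
  have hfact : (0:ℝ) < (n.factorial : ℝ) := by
    exact_mod_cast n.factorial_pos
  have key : ∀ j ∈ Finset.Icc l (2*l),
      ((𝒜.filter (fun s => s.card = j)).card : ℝ) / (n.choose j : ℝ)
      = (∑ S ∈ 𝒜.filter (fun s => s.card = j), ((Stmt0Aux.EE n l j S).card : ℝ)) /
          (n.factorial : ℝ) := by
    intro j hj
    rw [Finset.mem_Icc] at hj
    have hjn : j ≤ n := by omega
    have hchoose : (0:ℝ) < (n.choose j : ℝ) := by
      exact_mod_cast Nat.choose_pos hjn
    have hterm : ∀ S ∈ 𝒜.filter (fun s => s.card = j),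
        ((Stmt0Aux.EE n l j S).card : ℝ) = (n.factorial : ℝ) / (n.choose j : ℝ) := by
      intro S hS
      rw [Finset.mem_filter] at hS
      have hnat := Stmt0Aux.EE_card (n:=n) (l:=l) (j:=j) hj.1 (by omega) hS.2
      have h2 : ((Stmt0Aux.EE n l j S).card : ℝ) * (n.choose j : ℝ) = (n.factorial : ℝ) := by
        exact_mod_cast congrArg (Nat.cast (R := ℝ)) hnat
      rw [eq_div_iff hchoose.ne']
      exact h2
    rw [Finset.sum_congr rfl hterm, Finset.sum_const, nsmul_eq_mul]
    field_simp
  rw [Finset.sum_congr rfl key, ← Finset.sum_div, div_le_one hfact]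
  have hnat : ∑ j ∈ Finset.Icc l (2*l), ∑ S ∈ 𝒜.filter (fun s => s.card = j),
      (Stmt0Aux.EE n l j S).card ≤ n.factorial := by
    rw [← Finset.sum_sigma ((Finset.Icc l (2*l))) (fun j => 𝒜.filter (fun s => s.card = j))
      (fun p => (Stmt0Aux.EE n l p.1 p.2).card)]
    have hdisj : ∀ x ∈ (Finset.Icc l (2*l)).sigma (fun j => 𝒜.filter (fun s => s.card = j)),
        ∀ y ∈ (Finset.Icc l (2*l)).sigma (fun j => 𝒜.filter (fun s => s.card = j)), x ≠ y →
        Disjoint (Stmt0Aux.EE n l x.1 x.2) (Stmt0Aux.EE n l y.1 y.2) := by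
      rintro ⟨j, S⟩ hx ⟨k, T⟩ hy hne
      simp only [Finset.mem_sigma, Finset.mem_Icc, Finset.mem_filter] at hx hy
      rw [Finset.disjoint_left]
      intro σ hσ1 hσ2
      simp only [Stmt0Aux.EE, Finset.mem_filter, Finset.mem_univ, true_and] at hσ1 hσ2
      rcases lt_trichotomy j k with hjk | hjk | hjk
      · exact Stmt0Aux.no_double hl 𝒜 h hx.1.1 hjk hy.1.2 hx.2.1 hy.2.1 hσ1 hσ2
      · subst hjk
        have hST : S = T := hσ1.symm.trans hσ2
        exact hne (by rw [hST])
      · exact Stmt0Aux.no_double hl 𝒜 h hy.1.1 hjk hx.1.2 hy.2.1 hx.2.1 hσ2 hσ1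
    calc ∑ p ∈ (Finset.Icc l (2*l)).sigma (fun j => 𝒜.filter (fun s => s.card = j)),
          (Stmt0Aux.EE n l p.1 p.2).card
        = (((Finset.Icc l (2*l)).sigma (fun j => 𝒜.filter (fun s => s.card = j))).biUnion
            (fun p => Stmt0Aux.EE n l p.1 p.2)).card := (Finset.card_biUnion hdisj).symm
      _ ≤ (Finset.univ : Finset (Equiv.Perm (Fin n))).card :=
          Finset.card_le_card (Finset.subset_univ _)
      _ = n.factorial := by rw [Finset.card_univ, Fintype.card_perm, Fintype.card_fin]
  exact_mod_cast hnat
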